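/- Let (c₁,…,c_m) ∈ ℂ^m be a quiddity cycle. Then η(−c₁)·η(−c₂)⋯η(−c_m) = (−1)^{m+1}·I₂. In particular, if m is even, then (−c₁,…,−c_m) is again a quiddity cycle. -/
import Mathlib


/-- The matrix `η(c) = !![c, -1; 1, 0]` over `ℂ`. -/
def eta (c : ℂ) : Matrix (Fin 2) (Fin 2) ℂ := !![c, -1; 1, 0]

/-- A quiddity cycle: a finite sequence `(c₁, …, c_m)`, encoded as a list, with
`η(c₁) ⋯ η(c_m) = -I₂`. -/
def IsQuiddity (l : List ℂ) : Prop := (l.map eta).prod = -1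

def Dmat : Matrix (Fin 2) (Fin 2) ℂ := !![1, 0; 0, -1]

lemma Dsq : Dmat * Dmat = 1 := by
  rw [Dmat, Matrix.mul_fin_two, Matrix.one_fin_two]
  norm_num

lemma eta_neg (c : ℂ) : eta (-c) = -(Dmat * eta c * Dmat) := by
  rw [eta, eta, Dmat, Matrix.mul_fin_two, Matrix.mul_fin_two]
  norm_num

lemma key (l : List ℂ) :
    (l.map (fun c => eta (-c))).prod =
      ((-1 : ℂ) ^ l.length) • (Dmat * (l.map eta).prod * Dmat) := by
  induction l with
  | nil => simp [Dsq]
  | cons c t ih =>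
      rw [List.map_cons, List.prod_cons, List.map_cons, List.prod_cons,
        List.length_cons, ih, eta_neg, pow_succ]
      rw [mul_smul_comm, Matrix.neg_mul]
      rw [show Dmat * eta c * Dmat * (Dmat * (t.map eta).prod * Dmat)
          = Dmat * eta c * (Dmat * Dmat) * (t.map eta).prod * Dmat by
        noncomm_ring]
      rw [Dsq, mul_one, smul_neg, ← neg_smul, mul_neg_one]
      noncomm_ring

theorem stmt3 (l : List ℂ) (h : IsQuiddity l) :
    ((l.map (fun c => eta (-c))).prod =
      ((-1 : ℂ) ^ (l.length + 1)) • (1 : Matrix (Fin 2) (Fin 2) ℂ)) ∧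
    (Even l.length → IsQuiddity (l.map (fun c => -c))) := by
  have hk := key l
  rw [h] at hk
  have h1 : Dmat * (-1 : Matrix (Fin 2) (Fin 2) ℂ) * Dmat = -1 := by
    rw [Matrix.mul_neg, Matrix.neg_mul, mul_one, Dsq]
  rw [h1] at hk
  have hmain : (l.map (fun c => eta (-c))).prod =
      ((-1 : ℂ) ^ (l.length + 1)) • (1 : Matrix (Fin 2) (Fin 2) ℂ) := by
    rw [hk, pow_succ]
    rw [smul_neg, ← neg_smul]
    ring_nf
  refine ⟨hmain, fun he => ?_⟩
  unfold IsQuiddity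
  rw [List.map_map]
  have : (l.map fun c => eta (-c)) = l.map (eta ∘ fun c => -c) := by
    simp [Function.comp]
  rw [← this, hmain, pow_succ, he.neg_one_pow]
  simp
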